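/- For every fixed x_θ ≥ 0, the function x_b ↦ F(x_b, x_θ) is concave on [0, ∞). Furthermore: (i) F(0, x_θ) = 0, and (ii) F(x_θ, x_θ) = x_θ. -/

import Mathlib

open MeasureTheory Real Filter

/-- Standard one-dimensional Gaussian pdf. -/
noncomputable def phi1 (x : ℝ) : ℝ := (Real.sqrt (2 * π))⁻¹ * Real.exp (-x ^ 2 / 2)

/-- `w(y, b) = e^{yb}/(e^{yb} + e^{−yb})`. -/
noncomputable def wgt (y b : ℝ) : ℝ :=
  Real.exp (y * b) / (Real.exp (y * b) + Real.exp (-(y * b)))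

/-- `P(x_a, x_b, x_θ) = ∫ w(y − x_a, x_b)·(φ(y − x_θ) + φ(y + x_θ))/2 dy`. -/
noncomputable def Pfun (xa xb xθ : ℝ) : ℝ :=
  ∫ y, wgt (y - xa) xb * ((phi1 (y - xθ) + phi1 (y + xθ)) / 2)

/-- `Γ(x_a, x_b, x_θ) = ∫ w(y − x_a, x_b)·y·(φ(y − x_θ) + φ(y + x_θ))/2 dy`. -/
noncomputable def Gfun (xa xb xθ : ℝ) : ℝ :=
  ∫ y, wgt (y - xa) xb * y * ((phi1 (y - xθ) + phi1 (y + xθ)) / 2)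

/-- `F(x_b, x_θ) = ∫ (2 w(y + x_θ, x_b) − 1)·(y + x_θ)·φ(y) dy`. -/
noncomputable def Ffun (xb xθ : ℝ) : ℝ :=
  ∫ y, (2 * wgt (y + xθ) xb - 1) * (y + xθ) * phi1 y

/-- Standard Gaussian cdf. -/
noncomputable def PhiCdf (x : ℝ) : ℝ := ∫ y in Set.Iic x, phi1 y

/-! ### Auxiliary lemmas -/

lemma exp_add_exp_pos (t : ℝ) : 0 < Real.exp t + Real.exp (-t) := by positivity

lemma two_wgt_sub_one (z b : ℝ) : 2 * wgt z b - 1 = Real.tanh (z * b) := by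
  have h := (exp_add_exp_pos (z * b)).ne'
  rw [Real.tanh_eq_sinh_div_cosh, Real.sinh_eq, Real.cosh_eq, wgt]
  field_simp
  ring

lemma hasDerivAt_tanh' (x : ℝ) : HasDerivAt Real.tanh (1 - Real.tanh x ^ 2) x := by
  have h : HasDerivAt (fun y => Real.sinh y / Real.cosh y)
      ((Real.cosh x * Real.cosh x - Real.sinh x * Real.sinh x) / Real.cosh x ^ 2) x :=
    (Real.hasDerivAt_sinh x).div (Real.hasDerivAt_cosh x) (Real.cosh_pos x).ne'
  have heq : (Real.cosh x * Real.cosh x - Real.sinh x * Real.sinh x) / Real.cosh x ^ 2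
      = 1 - Real.tanh x ^ 2 := by
    rw [Real.tanh_eq_sinh_div_cosh, div_pow]
    field_simp
  rw [heq] at h
  exact h.congr_of_eventuallyEq (Eventually.of_forall fun y => (Real.tanh_eq_sinh_div_cosh y))

lemma abs_tanh_le_one' (x : ℝ) : |Real.tanh x| ≤ 1 := by
  rw [Real.tanh_eq_sinh_div_cosh, abs_div, abs_of_pos (Real.cosh_pos x),
    div_le_one (Real.cosh_pos x)]
  have := Real.cosh_sq_sub_sinh_sq x
  nlinarith [abs_nonneg (Real.sinh x), sq_abs (Real.sinh x), Real.cosh_pos x]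

lemma tanh_nonneg' {x : ℝ} (hx : 0 ≤ x) : 0 ≤ Real.tanh x := by
  rw [Real.tanh_eq_sinh_div_cosh]
  exact div_nonneg (by rwa [Real.sinh_nonneg_iff]) (Real.cosh_pos x).le

lemma continuous_tanh' : Continuous Real.tanh :=
  Differentiable.continuous (fun x => (hasDerivAt_tanh' x).differentiableAt)

lemma tanh_sq_le_one (x : ℝ) : Real.tanh x ^ 2 ≤ 1 := by
  have h := pow_le_one₀ (abs_nonneg (Real.tanh x)) (abs_tanh_le_one' x) (n := 2)
  rwa [sq_abs] at h

lemma concave_scaled_tanh {c : ℝ} (hc : 0 ≤ c) :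
    ConcaveOn ℝ (Set.Ici 0) (fun b => c * Real.tanh (c * b)) := by
  have h0 : ∀ x : ℝ, HasDerivAt (fun y : ℝ => c * y) c x := fun x => by
    simpa using (hasDerivAt_id x).const_mul c
  have h1 : ∀ x : ℝ, HasDerivAt (fun b => Real.tanh (c * b)) ((1 - Real.tanh (c * x) ^ 2) * c) x :=
    fun x => (hasDerivAt_tanh' (c * x)).comp x (h0 x)
  apply concaveOn_of_hasDerivWithinAt2_nonpos (convex_Ici 0)
    (f' := fun b => c * ((1 - Real.tanh (c * b) ^ 2) * c))
    (f'' := fun b => c * (-(2 * Real.tanh (c * b) * ((1 - Real.tanh (c * b) ^ 2) * c)) * c))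
  · exact (continuous_const.mul (continuous_tanh'.comp (continuous_const.mul continuous_id))).continuousOn
  · intro x _
    exact ((h1 x).const_mul c).hasDerivWithinAt
  · intro x _
    have h3 : HasDerivAt (fun b => Real.tanh (c * b) ^ 2)
        (2 * Real.tanh (c * x) * ((1 - Real.tanh (c * x) ^ 2) * c)) x := by
      simpa using (h1 x).fun_pow 2
    exact (((h3.const_sub 1).mul_const c).const_mul c).hasDerivWithinAt
  · intro x hx
    rw [interior_Ici] at hx
    have ht : 0 ≤ Real.tanh (c * x) := tanh_nonneg' (mul_nonneg hc (le_of_lt hx))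
    have ht2 := tanh_sq_le_one (c * x)
    nlinarith [mul_nonneg (mul_nonneg (mul_nonneg (mul_nonneg hc hc) hc) ht)
      (sub_nonneg.2 ht2)]

lemma tanh_mul_self (z b : ℝ) : Real.tanh (z * b) * z = |z| * Real.tanh (|z| * b) := by
  rcases abs_cases z with ⟨h1, _⟩ | ⟨h1, _⟩
  · rw [h1, mul_comm]
  · rw [h1, show -z * b = -(z * b) by ring, Real.tanh_neg]
    ring

/-! ### Gaussian integrals -/

lemma phi1_nonneg (x : ℝ) : 0 ≤ phi1 x := by
  unfold phi1; positivity

lemma phi1_even (x : ℝ) : phi1 (-x) = phi1 x := by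
  unfold phi1; rw [neg_sq]

lemma phi1_eq (x : ℝ) : phi1 x = (Real.sqrt (2 * π))⁻¹ * Real.exp (-(1/2 : ℝ) * x ^ 2) := by
  unfold phi1; ring_nf

lemma integrable_phi1 : Integrable phi1 := by
  have h := (integrable_exp_neg_mul_sq (show (0:ℝ) < 1/2 by norm_num)).const_mul
    ((Real.sqrt (2 * π))⁻¹)
  exact h.congr (Eventually.of_forall fun x => (phi1_eq x).symm)

lemma integrable_id_phi1 : Integrable (fun x => x * phi1 x) := by
  have h := (integrable_mul_exp_neg_mul_sq (show (0:ℝ) < 1/2 by norm_num)).const_mul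
    ((Real.sqrt (2 * π))⁻¹)
  exact h.congr (Eventually.of_forall fun x => by simp only [phi1_eq]; ring)

lemma integrable_affine_phi1 (a : ℝ) : Integrable (fun x => (x + a) * phi1 x) := by
  have h := integrable_id_phi1.add (integrable_phi1.const_mul a)
  exact h.congr (Eventually.of_forall fun x => by simp; ring)

lemma integral_phi1 : ∫ x, phi1 x = 1 := by
  have h : ∫ x, Real.exp (-(1/2 : ℝ) * x ^ 2) = Real.sqrt (π / (1/2)) :=
    integral_gaussian (1/2)
  have : ∫ x, phi1 x = (Real.sqrt (2 * π))⁻¹ * Real.sqrt (π / (1/2)) := by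
    rw [← h, ← integral_const_mul]
    exact integral_congr_ae (Eventually.of_forall fun x => phi1_eq x)
  rw [this, show π / (1/2 : ℝ) = 2 * π by ring,
    inv_mul_cancel₀ (by positivity : Real.sqrt (2*π) ≠ 0)]

lemma integral_id_phi1 : ∫ x, x * phi1 x = 0 := by
  have h := MeasureTheory.integral_neg_eq_self (fun x => x * phi1 x) volume
  simp only [phi1_even, neg_mul] at h
  rw [integral_neg] at h
  linarith

lemma integrable_moment_shift (a : ℝ) : Integrable (fun x => x * phi1 (x - a)) := by
  have h := Integrable.comp_sub_right (integrable_affine_phi1 a) a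
  exact h.congr (Eventually.of_forall fun x => by simp)

lemma integral_moment_shift (a : ℝ) : ∫ x, x * phi1 (x - a) = a := by
  have h := MeasureTheory.integral_add_right_eq_self (μ := volume) (fun x => x * phi1 (x - a)) a
  simp only [add_sub_cancel_right] at h
  rw [← h]
  have : ∫ x, (x + a) * phi1 x = (∫ x, x * phi1 x) + a * ∫ x, phi1 x := by
    rw [← integral_const_mul, ← integral_add integrable_id_phi1 (integrable_phi1.const_mul a)]
    exact integral_congr_ae (Eventually.of_forall fun x => by ring)
  rw [this, integral_id_phi1, integral_phi1]; ring

lemma integrable_moment_add (a : ℝ) : Integrable (fun x => x * phi1 (x + a)) := by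
  have h := integrable_moment_shift (-a)
  simpa [sub_neg_eq_add] using h

lemma integral_moment_add (a : ℝ) : ∫ x, x * phi1 (x + a) = -a := by
  have h := integral_moment_shift (-a)
  simpa [sub_neg_eq_add] using h

/-! ### The key pointwise identity -/

lemma key_pointwise (θ x : ℝ) :
    Real.tanh (x * θ) * (phi1 (x - θ) + phi1 (x + θ)) = phi1 (x - θ) - phi1 (x + θ) := by
  have h1 : phi1 (x - θ) = (Real.sqrt (2 * π))⁻¹ *
      (Real.exp (-(x ^ 2 + θ ^ 2) / 2) * Real.exp (x * θ)) := by
    rw [phi1, ← Real.exp_add]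
    ring_nf
  have h2 : phi1 (x + θ) = (Real.sqrt (2 * π))⁻¹ *
      (Real.exp (-(x ^ 2 + θ ^ 2) / 2) * Real.exp (-(x * θ))) := by
    rw [phi1, ← Real.exp_add]
    ring_nf
  have hpos := (exp_add_exp_pos (x * θ)).ne'
  rw [h1, h2, Real.tanh_eq_sinh_div_cosh, Real.sinh_eq, Real.cosh_eq]
  field_simp

/-! ### Integrability of the `Ffun` integrand -/

lemma continuous_wgt_term (θ b : ℝ) : Continuous (fun y : ℝ => 2 * wgt (y + θ) b - 1) := by
  have : (fun y : ℝ => 2 * wgt (y + θ) b - 1) = fun y => Real.tanh ((y + θ) * b) := by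
    funext y; exact two_wgt_sub_one _ _
  rw [this]
  exact continuous_tanh'.comp ((continuous_id.add continuous_const).mul continuous_const)

lemma integrable_Ffun_integrand (θ b : ℝ) :
    Integrable (fun y => (2 * wgt (y + θ) b - 1) * (y + θ) * phi1 y) := by
  have h := Integrable.bdd_mul (integrable_affine_phi1 θ)
    (continuous_wgt_term θ b).aestronglyMeasurable
    (c := 1) (Eventually.of_forall fun y => by
      rw [two_wgt_sub_one, Real.norm_eq_abs]
      exact abs_tanh_le_one' _)
  exact h.congr (Eventually.of_forall fun y => by ring)

/-! ### Per-point concavity -/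

lemma integrand_concave (θ y : ℝ) :
    ConcaveOn ℝ (Set.Ici 0) (fun b => (2 * wgt (y + θ) b - 1) * (y + θ) * phi1 y) := by
  set z := y + θ with hz
  have hcomb := (concave_scaled_tanh (abs_nonneg z)).smul (phi1_nonneg y)
  have heq : (fun b => (2 * wgt z b - 1) * z * phi1 y)
      = phi1 y • (fun b => |z| * Real.tanh (|z| * b)) := by
    funext b
    simp only [Pi.smul_apply, smul_eq_mul, two_wgt_sub_one, tanh_mul_self]
    ring
  rw [heq]
  exact hcomb

/-! ### Main theorem -/

/-- `F(·, x_θ)` is concave on `[0, ∞)`, with `F(0, x_θ) = 0` and `F(x_θ, x_θ) = x_θ`. -/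
theorem stmt18 (xθ : ℝ) (hθ : 0 ≤ xθ) :
    ConcaveOn ℝ (Set.Ici 0) (fun xb => Ffun xb xθ) ∧
    Ffun 0 xθ = 0 ∧ Ffun xθ xθ = xθ := by
  refine ⟨?_, ?_, ?_⟩
  · -- Concavity
    refine ⟨convex_Ici 0, ?_⟩
    intro p hp q hq a c ha hc hac
    simp only [smul_eq_mul, Ffun]
    have hI : ∀ b : ℝ, Integrable (fun y => (2 * wgt (y + xθ) b - 1) * (y + xθ) * phi1 y) :=
      integrable_Ffun_integrand xθ
    calc a * (∫ y, (2 * wgt (y + xθ) p - 1) * (y + xθ) * phi1 y)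
          + c * (∫ y, (2 * wgt (y + xθ) q - 1) * (y + xθ) * phi1 y)
        = ∫ y, (a * ((2 * wgt (y + xθ) p - 1) * (y + xθ) * phi1 y)
            + c * ((2 * wgt (y + xθ) q - 1) * (y + xθ) * phi1 y)) := by
          rw [integral_add ((hI p).const_mul a) ((hI q).const_mul c),
            integral_const_mul, integral_const_mul]
      _ ≤ ∫ y, (2 * wgt (y + xθ) (a * p + c * q) - 1) * (y + xθ) * phi1 y := by
          apply integral_mono (((hI p).const_mul a).add ((hI q).const_mul c))
            (hI (a * p + c * q))
          intro y
          have h := (integrand_concave xθ y).2 hp hq ha hc hac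
          simpa [smul_eq_mul] using h
  · -- Ffun 0 xθ = 0
    have : (fun y => (2 * wgt (y + xθ) 0 - 1) * (y + xθ) * phi1 y) = fun _ => (0 : ℝ) := by
      funext y
      rw [two_wgt_sub_one]
      simp
    rw [Ffun, this, integral_zero]
  · -- Ffun xθ xθ = xθ
    set θ := xθ
    have hrw : Ffun θ θ = ∫ x, Real.tanh (x * θ) * (x * phi1 (x - θ)) := by
      rw [Ffun]
      have := MeasureTheory.integral_add_right_eq_self (μ := volume)
        (fun x => Real.tanh (x * θ) * (x * phi1 (x - θ))) θ
      rw [← this]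
      refine integral_congr_ae (Eventually.of_forall fun y => ?_)
      simp only [two_wgt_sub_one, add_sub_cancel_right]
      ring
    -- integrability of the two symmetrized integrands
    have meas₁ : AEStronglyMeasurable (fun x : ℝ => Real.tanh (x * θ)) volume :=
      (continuous_tanh'.comp (continuous_id.mul continuous_const)).aestronglyMeasurable
    have hbd : ∃ C : ℝ, ∀ x : ℝ, ‖Real.tanh (x * θ)‖ ≤ C :=
      ⟨1, fun x => by rw [Real.norm_eq_abs]; exact abs_tanh_le_one' _⟩
    have hInt₁ : Integrable (fun x => Real.tanh (x * θ) * (x * phi1 (x - θ))) :=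
      Integrable.bdd_mul (integrable_moment_shift θ) meas₁ (Eventually.of_forall hbd.choose_spec)
    have hInt₂ : Integrable (fun x => Real.tanh (x * θ) * (x * phi1 (x + θ))) :=
      Integrable.bdd_mul (integrable_moment_add θ) meas₁ (Eventually.of_forall hbd.choose_spec)
    -- symmetry: the two integrals agree
    have hsym : (∫ x, Real.tanh (x * θ) * (x * phi1 (x - θ)))
        = ∫ x, Real.tanh (x * θ) * (x * phi1 (x + θ)) := by
      have h := MeasureTheory.integral_neg_eq_self (μ := volume)
        (fun x => Real.tanh (x * θ) * (x * phi1 (x + θ)))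
      rw [← h]
      refine integral_congr_ae (Eventually.of_forall fun x => ?_)
      show Real.tanh (x * θ) * (x * phi1 (x - θ)) = Real.tanh (-x * θ) * (-x * phi1 (-x + θ))
      rw [show -x + θ = -(x - θ) by ring, show -x * θ = -(x * θ) by ring, phi1_even,
        Real.tanh_neg]
      ring
    -- adding the two
    have hsum : (∫ x, Real.tanh (x * θ) * (x * phi1 (x - θ)))
        + (∫ x, Real.tanh (x * θ) * (x * phi1 (x + θ))) = 2 * θ := by
      rw [← integral_add hInt₁ hInt₂]
      have : (fun x => Real.tanh (x * θ) * (x * phi1 (x - θ))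
          + Real.tanh (x * θ) * (x * phi1 (x + θ)))
          = fun x => x * phi1 (x - θ) - x * phi1 (x + θ) := by
        funext x
        have h := key_pointwise θ x
        linear_combination x * h
      rw [this, integral_sub (integrable_moment_shift θ) (integrable_moment_add θ),
        integral_moment_shift, integral_moment_add]
      ring
    rw [hrw]
    rw [hsym] at hsum ⊢
    linarith
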